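/- Fix p ∈ [1,∞) and a metric space (X,d_X) containing at least two points. Then for every integer n ≥ 2, every n×n symmetric stochastic matrix A satisfies 2·γ(A, d_X^p) ≤ γ₊((I+A)/2, d_X^p) ≤ 2^{2p+1}·γ(A, d_X^p), where I is the n×n identity matrix. -/

import Mathlib

open scoped ENNReal

/-- An `n × n` real matrix is symmetric and stochastic. -/
def IsSymmStochastic {n : ℕ} (A : Matrix (Fin n) (Fin n) ℝ) : Prop :=
  (∀ i j, A i j = A j i) ∧ (∀ i j, 0 ≤ A i j) ∧ ∀ i, ∑ j, A i j = 1

/-- The nonlinear spectral gap quantity `γ(A, d_X^p)`. -/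
noncomputable def gammaNL {n : ℕ} (A : Matrix (Fin n) (Fin n) ℝ)
    (X : Type*) [PseudoMetricSpace X] (p : ℝ) : ℝ≥0∞ :=
  sInf {g : ℝ≥0∞ | 0 < g ∧ ∀ x : Fin n → X,
    ENNReal.ofReal ((∑ i, ∑ j, dist (x i) (x j) ^ p) / (n : ℝ) ^ 2) ≤
      g / (n : ℝ≥0∞) * ENNReal.ofReal (∑ i, ∑ j, A i j * dist (x i) (x j) ^ p)}

/-- The absolute nonlinear spectral gap quantity `γ₊(A, d_X^p)`. -/
noncomputable def gammaPlusNL {n : ℕ} (A : Matrix (Fin n) (Fin n) ℝ)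
    (X : Type*) [PseudoMetricSpace X] (p : ℝ) : ℝ≥0∞ :=
  sInf {g : ℝ≥0∞ | 0 < g ∧ ∀ x y : Fin n → X,
    ENNReal.ofReal ((∑ i, ∑ j, dist (x i) (y j) ^ p) / (n : ℝ) ^ 2) ≤
      g / (n : ℝ≥0∞) * ENNReal.ofReal (∑ i, ∑ j, A i j * dist (x i) (y j) ^ p)}

open scoped NNReal

lemma myrpow_add (p : ℝ) (hp : 1 ≤ p) {a b : ℝ} (ha : 0 ≤ a) (hb : 0 ≤ b) :
    (a + b) ^ p ≤ (2:ℝ) ^ (p - 1) * (a ^ p + b ^ p) := by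
  lift a to ℝ≥0 using ha
  lift b to ℝ≥0 using hb
  have := NNReal.rpow_add_le_mul_rpow_add_rpow a b hp
  exact_mod_cast this

lemma myrpow_tri (p : ℝ) (hp : 1 ≤ p) {X : Type*} [PseudoMetricSpace X] (x y z : X) :
    dist x z ^ p ≤ (2:ℝ) ^ (p - 1) * (dist x y ^ p + dist y z ^ p) :=
  le_trans (Real.rpow_le_rpow dist_nonneg (dist_triangle x y z) (by linarith))
    (myrpow_add p hp dist_nonneg dist_nonneg)

section Main

variable (p : ℝ) {X : Type*} [MetricSpace X] {n : ℕ} (A : Matrix (Fin n) (Fin n) ℝ)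

/-- identity `2 ∑ B_{ij} f_{ij} = ∑ f_{ii} + ∑ A_{ij} f_{ij}` for `B = (I+A)/2`. -/
lemma B_sum_eq (f : Fin n → Fin n → ℝ) :
    2 * (∑ i, ∑ j, ((1 / 2 : ℝ) • (1 + A)) i j * f i j) =
      (∑ i, f i i) + ∑ i, ∑ j, A i j * f i j := by
  have h : ∀ i j : Fin n, 2 * (((1 / 2 : ℝ) • (1 + A)) i j * f i j) =
      (if i = j then f i j else 0) + A i j * f i j := by
    intro i j
    simp only [Matrix.smul_apply, Matrix.add_apply, Matrix.one_apply, smul_eq_mul]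
    split <;> ring
  calc 2 * (∑ i, ∑ j, ((1 / 2 : ℝ) • (1 + A)) i j * f i j)
      = ∑ i, ∑ j, 2 * (((1 / 2 : ℝ) • (1 + A)) i j * f i j) := by
        rw [Finset.mul_sum]; exact Finset.sum_congr rfl fun i _ => Finset.mul_sum _ _ _
    _ = ∑ i, ∑ j, ((if i = j then f i j else 0) + A i j * f i j) := by
        exact Finset.sum_congr rfl fun i _ => Finset.sum_congr rfl fun j _ => h i j
    _ = ∑ i, ((∑ j, if i = j then f i j else 0) + ∑ j, A i j * f i j) :=
        Finset.sum_congr rfl fun i _ => Finset.sum_add_distrib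
    _ = (∑ i, ∑ j, if i = j then f i j else 0) + ∑ i, ∑ j, A i j * f i j :=
        Finset.sum_add_distrib
    _ = (∑ i, f i i) + ∑ i, ∑ j, A i j * f i j := by
        congr 1
        exact Finset.sum_congr rfl fun i _ => by simp [Finset.sum_ite_eq]

end Main

section TwoPoint

variable (p : ℝ) {X : Type*} [MetricSpace X] {n : ℕ} (A : Matrix (Fin n) (Fin n) ℝ)

lemma sum_ite_zero_ne [NeZero n] (c' : ℝ) :
    ∑ j : Fin n, (if j = 0 then (0:ℝ) else c') = ((n:ℝ) - 1) * c' := by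
  have h : ∀ j : Fin n, (if j = 0 then (0:ℝ) else c') = c' - (if j = 0 then c' else 0) :=
    fun j => by split <;> ring
  simp_rw [h]
  rw [Finset.sum_sub_distrib, Finset.sum_const, Finset.sum_ite_eq']
  simp [Finset.card_univ, nsmul_eq_mul]
  ring

lemma hdist_twopoint [NeZero n] (hp : 1 ≤ p) {a b : X} (x0 : Fin n → X)
    (hx0 : ∀ i, x0 i = if i = 0 then a else b) (i j : Fin n) :
    dist (x0 i) (x0 j) ^ p =
      if i = 0 then (if j = 0 then 0 else dist a b ^ p)
      else (if j = 0 then dist a b ^ p else 0) := by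
  have hpne : p ≠ 0 := by intro h; rw [h] at hp; norm_num at hp
  by_cases hi : i = 0 <;> by_cases hj : j = 0 <;>
    simp [hx0, hi, hj, Real.zero_rpow hpne, dist_comm b a]

lemma twopoint_dist_sum [NeZero n] (hp : 1 ≤ p) {a b : X} (x0 : Fin n → X)
    (hx0 : ∀ i, x0 i = if i = 0 then a else b) :
    ∑ i, ∑ j, dist (x0 i) (x0 j) ^ p = 2 * ((n:ℝ) - 1) * (dist a b ^ p) := by
  set c' := dist a b ^ p with hc'
  calc ∑ i, ∑ j, dist (x0 i) (x0 j) ^ p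
      = ∑ i : Fin n, (if i = 0 then ((n:ℝ) - 1) * c' else c') := by
        refine Finset.sum_congr rfl fun i _ => ?_
        simp_rw [hdist_twopoint p hp x0 hx0 i]
        by_cases hi : i = 0
        · simp only [hi, if_true]
          exact sum_ite_zero_ne c'
        · simp only [hi, if_false]
          simp [Finset.sum_ite_eq', hc']
    _ = 2 * ((n:ℝ) - 1) * c' := by
        have h : ∀ i : Fin n, (if i = 0 then ((n:ℝ) - 1) * c' else c') =
            c' + (if i = 0 then ((n:ℝ) - 2) * c' else 0) := fun i => by split <;> ring
        simp_rw [h]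
        rw [Finset.sum_add_distrib, Finset.sum_const, Finset.sum_ite_eq']
        simp [Finset.card_univ, nsmul_eq_mul]
        ring

lemma twopoint_A_sum [NeZero n] (hp : 1 ≤ p) (hA : IsSymmStochastic A) {a b : X}
    (x0 : Fin n → X) (hx0 : ∀ i, x0 i = if i = 0 then a else b) :
    ∑ i, ∑ j, A i j * dist (x0 i) (x0 j) ^ p ≤ 2 * (dist a b ^ p) := by
  obtain ⟨hsymm, hnn, hrow⟩ := hA
  set c' := dist a b ^ p with hc'
  have hc'nn : 0 ≤ c' := Real.rpow_nonneg dist_nonneg p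
  have hstep : ∑ i, ∑ j, A i j * dist (x0 i) (x0 j) ^ p ≤
      ∑ i : Fin n, ((if i = 0 then c' else 0) + A i 0 * c') := by
    refine Finset.sum_le_sum fun i _ => ?_
    simp_rw [hdist_twopoint p hp x0 hx0 i]
    by_cases hi : i = 0
    · simp only [hi, if_true]
      calc ∑ j : Fin n, A 0 j * (if j = 0 then 0 else c')
          ≤ ∑ j : Fin n, A 0 j * c' := by
            refine Finset.sum_le_sum fun j _ => ?_
            refine mul_le_mul_of_nonneg_left ?_ (hnn 0 j)
            split <;> simp [hc'nn]
        _ = c' := by rw [← Finset.sum_mul, hrow 0, one_mul]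
        _ ≤ c' + A 0 0 * c' := by
            have := mul_nonneg (hnn 0 0) hc'nn; linarith
    · simp only [hi, if_false]
      have : ∀ j : Fin n, A i j * (if j = 0 then c' else 0) =
          (if j = 0 then A i j * c' else 0) := fun j => by split <;> ring
      simp_rw [← hc', this]
      rw [Finset.sum_ite_eq']
      simp
  refine hstep.trans ?_
  rw [Finset.sum_add_distrib, Finset.sum_ite_eq']
  have : ∑ i : Fin n, A i 0 * c' = c' := by
    have h0 : ∀ i : Fin n, A i 0 = A 0 i := fun i => hsymm i 0
    simp_rw [h0]
    rw [← Finset.sum_mul, hrow 0, one_mul]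
  rw [this]
  simp
  linarith

end TwoPoint

section Half

variable (p : ℝ) {X : Type*} [MetricSpace X] {n : ℕ} (A : Matrix (Fin n) (Fin n) ℝ)

lemma half_le_g (hp : 1 ≤ p) (hX : ∃ a b : X, a ≠ b) (hn : 2 ≤ n) (hA : IsSymmStochastic A)
    {g : ℝ≥0∞}
    (hgx : ∀ x : Fin n → X,
      ENNReal.ofReal ((∑ i, ∑ j, dist (x i) (x j) ^ p) / (n : ℝ) ^ 2) ≤
        g / (n : ℝ≥0∞) * ENNReal.ofReal (∑ i, ∑ j, A i j * dist (x i) (x j) ^ p)) :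
    (2:ℝ≥0∞)⁻¹ ≤ g := by
  rcases eq_or_ne g ⊤ with rfl | hgt
  · exact le_top
  haveI : NeZero n := ⟨by omega⟩
  obtain ⟨a, b, hab⟩ := hX
  have hn2 : (2:ℝ) ≤ n := by exact_mod_cast hn
  have hn0 : (0:ℝ) < n := by linarith
  set x0 : Fin n → X := fun i => if i = 0 then a else b with hx0def
  have hx0 : ∀ i, x0 i = if i = 0 then a else b := fun i => rfl
  have hc'pos : 0 < dist a b ^ p := Real.rpow_pos_of_pos (dist_pos.2 hab) p
  have h := hgx x0
  rw [twopoint_dist_sum p hp x0 hx0] at h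
  have hAs := twopoint_A_sum p A hp hA x0 hx0
  have hGnn : 0 ≤ g.toReal := ENNReal.toReal_nonneg
  have hgeq : g = ENNReal.ofReal g.toReal := (ENNReal.ofReal_toReal hgt).symm
  rw [hgeq] at h
  have h2 : ENNReal.ofReal (2 * ((n:ℝ) - 1) * (dist a b ^ p) / (n:ℝ)^2) ≤
      ENNReal.ofReal g.toReal / (n : ℝ≥0∞) * ENNReal.ofReal (2 * (dist a b ^ p)) :=
    h.trans (mul_le_mul_right (ENNReal.ofReal_le_ofReal hAs) _)
  rw [← ENNReal.ofReal_natCast n, ← ENNReal.ofReal_div_of_pos hn0,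
    ← ENNReal.ofReal_mul (by positivity)] at h2
  have hreal : 2 * ((n:ℝ) - 1) * (dist a b ^ p) / (n:ℝ)^2 ≤
      g.toReal / n * (2 * (dist a b ^ p)) :=
    (ENNReal.ofReal_le_ofReal_iff (by positivity)).1 h2
  have hhalf : (1/2 : ℝ) ≤ g.toReal := by
    rw [div_mul_eq_mul_div, div_le_div_iff₀ (by positivity) (by positivity)] at hreal
    nlinarith [mul_pos hc'pos hn0, mul_nonneg (mul_nonneg hc'pos.le hn0.le)
      (by linarith : (0:ℝ) ≤ (n:ℝ) - 2)]
  rw [hgeq]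
  calc (2:ℝ≥0∞)⁻¹ = ENNReal.ofReal (1/2) := by
        rw [ENNReal.ofReal_div_of_pos (by norm_num), ENNReal.ofReal_one, ENNReal.ofReal_ofNat]
        exact (one_div _).symm
    _ ≤ ENNReal.ofReal g.toReal := ENNReal.ofReal_le_ofReal hhalf

end Half

lemma double_sum_mul_add {n : ℕ} (c : ℝ) (f g : Fin n → Fin n → ℝ) :
    ∑ i, ∑ j, c * (f i j + g i j) =
      c * (∑ i, ∑ j, f i j) + c * (∑ i, ∑ j, g i j) := by
  simp only [Finset.mul_sum, mul_add, Finset.sum_add_distrib]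

lemma double_sum_const_left {n : ℕ} (f : Fin n → ℝ) :
    ∑ _i : Fin n, ∑ j, f j = (n:ℝ) * ∑ j, f j := by
  rw [Finset.sum_const, Finset.card_univ, Fintype.card_fin, nsmul_eq_mul]

/-- **Lemma.** Fix `p ∈ [1,∞)` and a metric space `X` with at least two points.  For every
integer `n ≥ 2`, every `n × n` symmetric stochastic matrix `A` satisfies
`2·γ(A,d_X^p) ≤ γ₊((I+A)/2, d_X^p) ≤ 2^{2p+1}·γ(A,d_X^p)`. -/
theorem gammaPlus_half_identity_plus_A (p : ℝ) (hp : 1 ≤ p)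
    (X : Type*) [MetricSpace X] (hX : ∃ a b : X, a ≠ b)
    {n : ℕ} (hn : 2 ≤ n) (A : Matrix (Fin n) (Fin n) ℝ) (hA : IsSymmStochastic A) :
    2 * gammaNL A X p ≤ gammaPlusNL ((1 / 2 : ℝ) • (1 + A)) X p ∧
      gammaPlusNL ((1 / 2 : ℝ) • (1 + A)) X p ≤ (2 : ℝ≥0∞) ^ (2 * p + 1) * gammaNL A X p := by
  have hpne : p ≠ 0 := by intro h; rw [h] at hp; norm_num at hp
  obtain ⟨hsymm, hnn, hrow⟩ := hA
  constructor
  · -- lower bound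
    refine le_sInf fun gp hgp => ?_
    obtain ⟨hgp0, hgpineq⟩ := hgp
    have hmem : gammaNL A X p ≤ gp / 2 := by
      refine sInf_le ⟨ENNReal.div_pos hgp0.ne' (by norm_num), fun x => ?_⟩
      have h := hgpineq x x
      have hB := B_sum_eq A (fun i j => dist (x i) (x j) ^ p)
      have hdiag : ∑ i, dist (x i) (x i) ^ p = 0 := by
        simp [Real.zero_rpow hpne]
      rw [hdiag, zero_add] at hB
      have hBS : ∑ i, ∑ j, ((1 / 2 : ℝ) • (1 + A)) i j * dist (x i) (x j) ^ p
          = (∑ i, ∑ j, A i j * dist (x i) (x j) ^ p) / 2 := by linarith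
      rw [hBS, ENNReal.ofReal_div_of_pos (by norm_num : (0:ℝ) < 2),
        ENNReal.ofReal_ofNat] at h
      refine h.trans (le_of_eq ?_)
      rw [div_eq_mul_inv, div_eq_mul_inv, div_eq_mul_inv, div_eq_mul_inv]
      ring
    calc 2 * gammaNL A X p ≤ 2 * (gp / 2) := mul_le_mul_right hmem 2
      _ = gp := ENNReal.mul_div_cancel (by norm_num) (by norm_num)
  · -- upper bound
    have hc0 : ((2:ℝ≥0∞) ^ (2 * p + 1)) ≠ 0 :=
      (ENNReal.rpow_pos (by norm_num) (by simp)).ne'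
    have hct : ((2:ℝ≥0∞) ^ (2 * p + 1)) ≠ ⊤ :=
      ENNReal.rpow_ne_top_of_nonneg (by linarith) (by simp)
    rw [mul_comm, ← ENNReal.div_le_iff hc0 hct]
    refine le_sInf fun g hg => ?_
    obtain ⟨hg0, hgx⟩ := hg
    rw [ENNReal.div_le_iff hc0 hct, mul_comm]
    have hghalf : (2:ℝ≥0∞)⁻¹ ≤ g := half_le_g p A hp hX hn ⟨hsymm, hnn, hrow⟩ hgx
    refine sInf_le ⟨ENNReal.mul_pos hc0 hg0.ne', fun x y => ?_⟩
    have hn2 : (2:ℝ) ≤ n := by exact_mod_cast hn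
    have hn0 : (0:ℝ) < n := by linarith
    -- real nonnegativity facts
    have hdnn : ∀ (u v : X), 0 ≤ dist u v ^ p := fun u v => Real.rpow_nonneg dist_nonneg p
    have hSnn : 0 ≤ ∑ i, ∑ j, dist (x i) (y j) ^ p :=
      Finset.sum_nonneg fun i _ => Finset.sum_nonneg fun j _ => hdnn _ _
    have hEnn : 0 ≤ ∑ i, ∑ j, dist (x i) (x j) ^ p :=
      Finset.sum_nonneg fun i _ => Finset.sum_nonneg fun j _ => hdnn _ _
    have hDnn : 0 ≤ ∑ i, dist (x i) (y i) ^ p :=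
      Finset.sum_nonneg fun i _ => hdnn _ _
    have hASnn : 0 ≤ ∑ i, ∑ j, A i j * dist (x i) (y j) ^ p :=
      Finset.sum_nonneg fun i _ => Finset.sum_nonneg fun j _ =>
        mul_nonneg (hnn i j) (hdnn _ _)
    have hAEnn : 0 ≤ ∑ i, ∑ j, A i j * dist (x i) (x j) ^ p :=
      Finset.sum_nonneg fun i _ => Finset.sum_nonneg fun j _ =>
        mul_nonneg (hnn i j) (hdnn _ _)
    have hpow_nn : (0:ℝ) < 2 ^ (p - 1) := Real.rpow_pos_of_pos two_pos _
    -- the key identity for T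
    have h2T : 2 * (∑ i, ∑ j, ((1 / 2 : ℝ) • (1 + A)) i j * dist (x i) (y j) ^ p) =
        (∑ i, dist (x i) (y i) ^ p) + ∑ i, ∑ j, A i j * dist (x i) (y j) ^ p :=
      B_sum_eq A (fun i j => dist (x i) (y j) ^ p)
    have hTnn : 0 ≤ ∑ i, ∑ j, ((1 / 2 : ℝ) • (1 + A)) i j * dist (x i) (y j) ^ p := by
      linarith
    have hD2T : ∑ i, dist (x i) (y i) ^ p ≤
        2 * ∑ i, ∑ j, ((1 / 2 : ℝ) • (1 + A)) i j * dist (x i) (y j) ^ p := by linarith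
    have hAS2T : ∑ i, ∑ j, A i j * dist (x i) (y j) ^ p ≤
        2 * ∑ i, ∑ j, ((1 / 2 : ℝ) • (1 + A)) i j * dist (x i) (y j) ^ p := by linarith
    -- R1 : S ≤ 2^(p-1) E + 2^(p-1) n D
    have hR1 : ∑ i, ∑ j, dist (x i) (y j) ^ p ≤
        2 ^ (p - 1) * (∑ i, ∑ j, dist (x i) (x j) ^ p)
          + 2 ^ (p - 1) * (n:ℝ) * ∑ i, dist (x i) (y i) ^ p := by
      calc ∑ i, ∑ j, dist (x i) (y j) ^ p
          ≤ ∑ i, ∑ j, (2:ℝ) ^ (p - 1) * (dist (x i) (x j) ^ p + dist (x j) (y j) ^ p) :=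
            Finset.sum_le_sum fun i _ => Finset.sum_le_sum fun j _ =>
              myrpow_tri p hp (x i) (x j) (y j)
        _ = 2 ^ (p - 1) * (∑ i, ∑ j, dist (x i) (x j) ^ p)
              + 2 ^ (p - 1) * ∑ _i : Fin n, ∑ j, dist (x j) (y j) ^ p :=
            double_sum_mul_add _ _ _
        _ = 2 ^ (p - 1) * (∑ i, ∑ j, dist (x i) (x j) ^ p)
              + 2 ^ (p - 1) * (n:ℝ) * ∑ i, dist (x i) (y i) ^ p := by
            rw [double_sum_const_left (fun j => dist (x j) (y j) ^ p)]
            ring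
    -- R2 : AE ≤ 2^(p+1) T
    have hcol : ∀ j, ∑ i, A i j = 1 := fun j => by
      rw [Finset.sum_congr rfl fun i _ => hsymm i j]
      exact hrow j
    have hR2 : ∑ i, ∑ j, A i j * dist (x i) (x j) ^ p ≤
        2 ^ (p - 1) * ((∑ i, ∑ j, A i j * dist (x i) (y j) ^ p)
          + ∑ i, dist (x i) (y i) ^ p) := by
      calc ∑ i, ∑ j, A i j * dist (x i) (x j) ^ p
          ≤ ∑ i, ∑ j, A i j * ((2:ℝ) ^ (p - 1) * (dist (x i) (y j) ^ p
              + dist (x j) (y j) ^ p)) := by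
            refine Finset.sum_le_sum fun i _ => Finset.sum_le_sum fun j _ =>
              mul_le_mul_of_nonneg_left ?_ (hnn i j)
            have := myrpow_tri p hp (x i) (y j) (x j)
            rwa [dist_comm (y j) (x j)] at this
        _ = ∑ i, ∑ j, (2:ℝ) ^ (p - 1) * (A i j * dist (x i) (y j) ^ p
              + A i j * dist (x j) (y j) ^ p) :=
            Finset.sum_congr rfl fun i _ => Finset.sum_congr rfl fun j _ => by ring
        _ = 2 ^ (p - 1) * (∑ i, ∑ j, A i j * dist (x i) (y j) ^ p)
              + 2 ^ (p - 1) * ∑ i, ∑ j, A i j * dist (x j) (y j) ^ p :=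
            double_sum_mul_add _ _ _
        _ = 2 ^ (p - 1) * ((∑ i, ∑ j, A i j * dist (x i) (y j) ^ p)
              + ∑ i, dist (x i) (y i) ^ p) := by
            have hAD : ∑ i, ∑ j, A i j * dist (x j) (y j) ^ p
                = ∑ i, dist (x i) (y i) ^ p := by
              rw [Finset.sum_comm]
              refine Finset.sum_congr rfl fun j _ => ?_
              rw [← Finset.sum_mul, hcol j, one_mul]
            rw [hAD]
            ring
    have hAE2 : ∑ i, ∑ j, A i j * dist (x i) (x j) ^ p ≤
        2 ^ (p + 1) * ∑ i, ∑ j, ((1 / 2 : ℝ) • (1 + A)) i j * dist (x i) (y j) ^ p := by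
      have hpow : (2:ℝ) ^ (p + 1) = 2 ^ (p - 1) * 4 := by
        rw [show p + 1 = (p - 1) + 1 + 1 by ring, Real.rpow_add_one two_ne_zero,
          Real.rpow_add_one two_ne_zero]
        ring
      rw [hpow]
      nlinarith [hR2, hD2T, hAS2T, hpow_nn]
    -- now the ENNReal chain
    have e1 : ENNReal.ofReal ((∑ i, ∑ j, dist (x i) (y j) ^ p) / (n:ℝ) ^ 2) ≤
        ENNReal.ofReal ((2:ℝ) ^ (p - 1))
            * ENNReal.ofReal ((∑ i, ∑ j, dist (x i) (x j) ^ p) / (n:ℝ) ^ 2)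
          + ENNReal.ofReal ((2:ℝ) ^ (p - 1) * ((∑ i, dist (x i) (y i) ^ p) / n)) := by
      rw [← ENNReal.ofReal_mul (by positivity),
        ← ENNReal.ofReal_add (by positivity) (by positivity)]
      refine ENNReal.ofReal_le_ofReal ?_
      rw [div_le_iff₀ (by positivity : (0:ℝ) < (n:ℝ) ^ 2)]
      have hexp : ((2:ℝ) ^ (p - 1) * ((∑ i, ∑ j, dist (x i) (x j) ^ p) / (n:ℝ) ^ 2)
            + 2 ^ (p - 1) * ((∑ i, dist (x i) (y i) ^ p) / n)) * (n:ℝ) ^ 2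
          = 2 ^ (p - 1) * (∑ i, ∑ j, dist (x i) (x j) ^ p)
            + 2 ^ (p - 1) * (n:ℝ) * ∑ i, dist (x i) (y i) ^ p := by
        field_simp
      rw [hexp]
      exact hR1
    have e3 : ENNReal.ofReal (∑ i, ∑ j, A i j * dist (x i) (x j) ^ p) ≤
        ENNReal.ofReal ((2:ℝ) ^ (p + 1)) * ENNReal.ofReal
          (∑ i, ∑ j, ((1 / 2 : ℝ) • (1 + A)) i j * dist (x i) (y j) ^ p) := by
      rw [← ENNReal.ofReal_mul (by positivity)]
      exact ENNReal.ofReal_le_ofReal hAE2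
    have e4 : ENNReal.ofReal ((2:ℝ) ^ (p - 1))
          * ENNReal.ofReal ((∑ i, ∑ j, dist (x i) (x j) ^ p) / (n:ℝ) ^ 2) ≤
        ENNReal.ofReal ((2:ℝ) ^ (2 * p)) * (g / n) * ENNReal.ofReal
          (∑ i, ∑ j, ((1 / 2 : ℝ) • (1 + A)) i j * dist (x i) (y j) ^ p) := by
      calc ENNReal.ofReal ((2:ℝ) ^ (p - 1))
            * ENNReal.ofReal ((∑ i, ∑ j, dist (x i) (x j) ^ p) / (n:ℝ) ^ 2)
          ≤ ENNReal.ofReal ((2:ℝ) ^ (p - 1)) * (g / n * (ENNReal.ofReal ((2:ℝ) ^ (p + 1))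
              * ENNReal.ofReal
                (∑ i, ∑ j, ((1 / 2 : ℝ) • (1 + A)) i j * dist (x i) (y j) ^ p))) :=
            mul_le_mul_right ((hgx x).trans (mul_le_mul_right e3 _)) _
        _ = (ENNReal.ofReal ((2:ℝ) ^ (p - 1)) * ENNReal.ofReal ((2:ℝ) ^ (p + 1)))
              * (g / n) * ENNReal.ofReal
                (∑ i, ∑ j, ((1 / 2 : ℝ) • (1 + A)) i j * dist (x i) (y j) ^ p) := by ring
        _ = ENNReal.ofReal ((2:ℝ) ^ (2 * p)) * (g / n) * ENNReal.ofReal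
              (∑ i, ∑ j, ((1 / 2 : ℝ) • (1 + A)) i j * dist (x i) (y j) ^ p) := by
            rw [← ENNReal.ofReal_mul (by positivity), ← Real.rpow_add two_pos]
            ring_nf
    have e5 : ENNReal.ofReal ((2:ℝ) ^ (p - 1) * ((∑ i, dist (x i) (y i) ^ p) / n)) ≤
        ENNReal.ofReal ((2:ℝ) ^ (2 * p)) * g * ENNReal.ofReal
          (∑ i, ∑ j, ((1 / 2 : ℝ) • (1 + A)) i j * dist (x i) (y j) ^ p) / n := by
      calc ENNReal.ofReal ((2:ℝ) ^ (p - 1) * ((∑ i, dist (x i) (y i) ^ p) / n))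
          ≤ ENNReal.ofReal ((2:ℝ) ^ p * (∑ i, ∑ j, ((1 / 2 : ℝ) • (1 + A)) i j
              * dist (x i) (y j) ^ p) / n) := by
            refine ENNReal.ofReal_le_ofReal ?_
            have h2p : (2:ℝ) ^ p = 2 ^ (p - 1) * 2 := by
              rw [← Real.rpow_add_one two_ne_zero]; ring_nf
            calc (2:ℝ) ^ (p - 1) * ((∑ i, dist (x i) (y i) ^ p) / n)
                = (2 ^ (p - 1) * ∑ i, dist (x i) (y i) ^ p) / n :=
                  (mul_div_assoc _ _ _).symm
              _ ≤ (2 ^ (p - 1) * (2 * ∑ i, ∑ j, ((1 / 2 : ℝ) • (1 + A)) i j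
                    * dist (x i) (y j) ^ p)) / n := by
                  gcongr
              _ = 2 ^ p * (∑ i, ∑ j, ((1 / 2 : ℝ) • (1 + A)) i j
                    * dist (x i) (y j) ^ p) / n := by rw [h2p]; ring
        _ = ENNReal.ofReal ((2:ℝ) ^ p) * ENNReal.ofReal
              (∑ i, ∑ j, ((1 / 2 : ℝ) • (1 + A)) i j * dist (x i) (y j) ^ p) / n := by
            rw [ENNReal.ofReal_div_of_pos hn0, ENNReal.ofReal_mul (by positivity),
              ENNReal.ofReal_natCast]
        _ ≤ ENNReal.ofReal ((2:ℝ) ^ (2 * p)) * g * ENNReal.ofReal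
              (∑ i, ∑ j, ((1 / 2 : ℝ) • (1 + A)) i j * dist (x i) (y j) ^ p) / n := by
            refine ENNReal.div_le_div_right (mul_le_mul_left ?_ _) _
            calc ENNReal.ofReal ((2:ℝ) ^ p) ≤ ENNReal.ofReal ((2:ℝ) ^ (2 * p) * 2⁻¹) := by
                  refine ENNReal.ofReal_le_ofReal ?_
                  rw [show (2:ℝ) ^ (2 * p) * 2⁻¹ = 2 ^ (2 * p - 1) from by
                    rw [show 2 * p - 1 = 2 * p + (-1) by ring, Real.rpow_add two_pos,
                      Real.rpow_neg_one]]
                  exact Real.rpow_le_rpow_of_exponent_le one_le_two (by linarith)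
              _ = ENNReal.ofReal ((2:ℝ) ^ (2 * p)) * (2:ℝ≥0∞)⁻¹ := by
                  rw [ENNReal.ofReal_mul (by positivity),
                    ENNReal.ofReal_inv_of_pos (by norm_num), ENNReal.ofReal_ofNat]
              _ ≤ ENNReal.ofReal ((2:ℝ) ^ (2 * p)) * g := mul_le_mul_right hghalf _
    have hc : (2:ℝ≥0∞) ^ (2 * p + 1) = 2 * ENNReal.ofReal ((2:ℝ) ^ (2 * p)) := by
      have h1 : ENNReal.ofReal ((2:ℝ) ^ (2 * p + 1)) = (2:ℝ≥0∞) ^ (2 * p + 1) := by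
        rw [← ENNReal.ofReal_rpow_of_pos (by norm_num : (0:ℝ) < 2), ENNReal.ofReal_ofNat]
      rw [← h1, Real.rpow_add_one two_ne_zero, ENNReal.ofReal_mul (by positivity),
        ENNReal.ofReal_ofNat]
      ring
    calc ENNReal.ofReal ((∑ i, ∑ j, dist (x i) (y j) ^ p) / (n:ℝ) ^ 2)
        ≤ _ + _ := e1
      _ ≤ _ := add_le_add e4 e5
      _ = (2:ℝ≥0∞) ^ (2 * p + 1) * g / (n:ℝ≥0∞) * ENNReal.ofReal
            (∑ i, ∑ j, ((1 / 2 : ℝ) • (1 + A)) i j * dist (x i) (y j) ^ p) := by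
          rw [hc]
          simp only [div_eq_mul_inv]
          ring
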